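/- arXiv:2403.07591 — 4 statements merged into one kernel-verified Lean document; each statement's English description precedes it below -/
import Mathlib

section
/- Let (Ω, P) be a probability space and let M₁, M₂, f : Ω → ℝ be square-integrable random variables. Suppose Cov[M₁, f] ≠ 0, Cov[M₂, f] ≠ 0, Cov[M₁, M₂] ≠ (Cov[M₂, f] · Var[M₁]) / Cov[M₁, f], and Cov[M₁, M₂] ≠ (Cov[M₁, f] · Var[M₂]) / Cov[M₂, f]. Then there exist real numbers w₁, w₂ such that ρ(w₁·M₁ + w₂·M₂, f) > max(ρ(M₁, f), ρ(M₂, f)), where ρ denotes the Pearson correlation. -/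
open MeasureTheory

/-- Covariance of two real random variables. -/
noncomputable def cov {Ω : Type*} [MeasurableSpace Ω] (P : Measure Ω) (X Y : Ω → ℝ) : ℝ :=
  ∫ ω, (X ω - ∫ ω', X ω' ∂P) * (Y ω - ∫ ω', Y ω' ∂P) ∂P

/-- Variance of a real random variable. -/
noncomputable def var {Ω : Type*} [MeasurableSpace Ω] (P : Measure Ω) (X : Ω → ℝ) : ℝ :=
  cov P X X

/-- Pearson correlation of two real random variables. -/
noncomputable def pearson {Ω : Type*} [MeasurableSpace Ω] (P : Measure Ω) (X Y : Ω → ℝ) : ℝ :=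
  cov P X Y / Real.sqrt (var P X * var P Y)

set_option maxHeartbeats 1000000

section Aux
variable {Ω : Type*} [MeasurableSpace Ω] (P : Measure Ω) [IsProbabilityMeasure P]

omit [IsProbabilityMeasure P] in
lemma l2_mul_integrable {X Y : Ω → ℝ} (hX : MemLp X 2 P) (hY : MemLp Y 2 P) :
    Integrable (fun ω => X ω * Y ω) P := by
  have h1 := hX.integrable_sq
  have h2 := hY.integrable_sq
  refine Integrable.mono' ((h1.add h2).div_const 2)
    (hX.aestronglyMeasurable.mul hY.aestronglyMeasurable) ?_
  filter_upwards with ω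
  simp only [Real.norm_eq_abs, Pi.add_apply]
  rw [abs_mul]
  nlinarith [sq_nonneg (|X ω| - |Y ω|), sq_abs (X ω), sq_abs (Y ω)]

omit [IsProbabilityMeasure P] in
lemma cov_comm (X Y : Ω → ℝ) : cov P X Y = cov P Y X := by
  unfold cov; congr 1; ext ω; ring

lemma cov_lin {X Y Z : Ω → ℝ} (hX : MemLp X 2 P) (hY : MemLp Y 2 P) (hZ : MemLp Z 2 P)
    (a b : ℝ) :
    cov P (fun ω => a * X ω + b * Y ω) Z = a * cov P X Z + b * cov P Y Z := by
  have hXi : Integrable X P := hX.integrable one_le_two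
  have hYi : Integrable Y P := hY.integrable one_le_two
  have hμ : (∫ ω, (a * X ω + b * Y ω) ∂P) = a * (∫ ω, X ω ∂P) + b * (∫ ω, Y ω ∂P) := by
    rw [integral_add (hXi.const_mul a) (hYi.const_mul b), integral_const_mul, integral_const_mul]
  have hXc : MemLp (fun ω => X ω - ∫ ω', X ω' ∂P) 2 P := hX.sub (memLp_const _)
  have hYc : MemLp (fun ω => Y ω - ∫ ω', Y ω' ∂P) 2 P := hY.sub (memLp_const _)
  have hZc : MemLp (fun ω => Z ω - ∫ ω', Z ω' ∂P) 2 P := hZ.sub (memLp_const _)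
  have hiXZ := l2_mul_integrable P hXc hZc
  have hiYZ := l2_mul_integrable P hYc hZc
  unfold cov
  rw [hμ]
  have : ∀ ω, (a * X ω + b * Y ω - (a * (∫ ω', X ω' ∂P) + b * (∫ ω', Y ω' ∂P))) *
        (Z ω - ∫ ω', Z ω' ∂P)
      = a * ((X ω - ∫ ω', X ω' ∂P) * (Z ω - ∫ ω', Z ω' ∂P))
        + b * ((Y ω - ∫ ω', Y ω' ∂P) * (Z ω - ∫ ω', Z ω' ∂P)) := fun ω => by ring
  simp_rw [this]
  rw [integral_add (hiXZ.const_mul a) (hiYZ.const_mul b), integral_const_mul, integral_const_mul]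

lemma pearson_combo {M₁ M₂ f : Ω → ℝ} (hM₁ : MemLp M₁ 2 P) (hM₂ : MemLp M₂ 2 P)
    (hf : MemLp f 2 P) (a b : ℝ) :
    pearson P (fun ω => a * M₁ ω + b * M₂ ω) f =
      (a * cov P M₁ f + b * cov P M₂ f) /
        Real.sqrt ((a ^ 2 * var P M₁ + 2 * a * b * cov P M₁ M₂ + b ^ 2 * var P M₂)
          * var P f) := by
  have hW : MemLp (fun ω => a * M₁ ω + b * M₂ ω) 2 P :=
    (hM₁.const_mul a).add (hM₂.const_mul b)
  have hcovWf : cov P (fun ω => a * M₁ ω + b * M₂ ω) f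
      = a * cov P M₁ f + b * cov P M₂ f := cov_lin P hM₁ hM₂ hf a b
  have hvarW : var P (fun ω => a * M₁ ω + b * M₂ ω)
      = a ^ 2 * var P M₁ + 2 * a * b * cov P M₁ M₂ + b ^ 2 * var P M₂ := by
    show cov P _ _ = _
    rw [cov_lin P hM₁ hM₂ hW a b,
      cov_comm P M₁ (fun ω => a * M₁ ω + b * M₂ ω),
      cov_comm P M₂ (fun ω => a * M₁ ω + b * M₂ ω),
      cov_lin P hM₁ hM₂ hM₁ a b, cov_lin P hM₁ hM₂ hM₂ a b,
      cov_comm P M₂ M₁]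
    show a * (a * cov P M₁ M₁ + b * cov P M₁ M₂) + b * (a * cov P M₁ M₂ + b * cov P M₂ M₂)
      = a ^ 2 * cov P M₁ M₁ + 2 * a * b * cov P M₁ M₂ + b ^ 2 * cov P M₂ M₂
    ring
  unfold pearson
  rw [hcovWf, hvarW]
end Aux


lemma sqrt_lt_of_sq (x y u v : ℝ) (hu : 0 < u) (hv : 0 < v)
    (hxy : x * y > 0) (hx : x ≠ 0)
    (hC : 0 < x * (y ^ 2 * u - x ^ 2 * v)) :
    x / Real.sqrt u < y / Real.sqrt v := by
  have hsu : 0 < Real.sqrt u := Real.sqrt_pos.mpr hu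
  have hsv : 0 < Real.sqrt v := Real.sqrt_pos.mpr hv
  rw [div_lt_div_iff₀ hsu hsv]
  rcases hx.lt_or_gt with hxneg | hxpos
  · have hy : y < 0 := by nlinarith
    have h2 : y ^ 2 * u < x ^ 2 * v := by nlinarith
    have e1 : -y * Real.sqrt u = Real.sqrt (y ^ 2 * u) := by
      rw [Real.sqrt_mul (sq_nonneg _), Real.sqrt_sq_eq_abs, abs_of_neg hy]
    have e2 : -x * Real.sqrt v = Real.sqrt (x ^ 2 * v) := by
      rw [Real.sqrt_mul (sq_nonneg _), Real.sqrt_sq_eq_abs, abs_of_neg hxneg]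
    have := Real.sqrt_lt_sqrt (by positivity) h2
    rw [← e1, ← e2] at this
    linarith
  · have hy : 0 < y := by nlinarith
    have h2 : x ^ 2 * v < y ^ 2 * u := by nlinarith
    have e1 : y * Real.sqrt u = Real.sqrt (y ^ 2 * u) := by
      rw [Real.sqrt_mul (sq_nonneg _), Real.sqrt_sq_eq_abs, abs_of_pos hy]
    have e2 : x * Real.sqrt v = Real.sqrt (x ^ 2 * v) := by
      rw [Real.sqrt_mul (sq_nonneg _), Real.sqrt_sq_eq_abs, abs_of_pos hxpos]
    have := Real.sqrt_lt_sqrt (by positivity) h2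
    rw [← e1, ← e2] at this
    linarith

lemma key (v₁ v₂ vf c₁ c₂ c : ℝ) (hv₁ : 0 < v₁) (hv₂ : 0 ≤ v₂) (hvf : 0 < vf)
    (hc₁ : c₁ ≠ 0) (hD : c₂ * v₁ - c₁ * c ≠ 0) :
    ∃ t : ℝ, 0 < v₁ + 2 * t * c + t ^ 2 * v₂ ∧
      c₁ / Real.sqrt (v₁ * vf) <
        (c₁ + t * c₂) / Real.sqrt ((v₁ + 2 * t * c + t ^ 2 * v₂) * vf) := by
  set D := c₂ * v₁ - c₁ * c with hDdef
  set B := c₂ ^ 2 * v₁ - c₁ ^ 2 * v₂ with hBdef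
  clear_value D B
  have habsD : 0 < |D| := abs_pos.mpr hD
  have habsc₁ : 0 < |c₁| := abs_pos.mpr hc₁
  obtain ⟨ε, hε0, hε1, hεv, hεc, hεB⟩ :
      ∃ ε : ℝ, 0 < ε ∧ ε ≤ 1 ∧ ε * (2 * |c| + v₂ + 1) ≤ v₁ ∧
        ε * (|c₂| + 1) ≤ |c₁| ∧ ε * (|c₁ * B| + 1) ≤ 2 * c₁ ^ 2 * |D| := by
    refine ⟨min (min 1 (v₁ / (2 * |c| + v₂ + 1)))
      (min (|c₁| / (|c₂| + 1)) (2 * c₁ ^ 2 * |D| / (|c₁ * B| + 1))), ?_, ?_, ?_, ?_, ?_⟩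
    · exact lt_min (lt_min one_pos (by positivity)) (lt_min (by positivity) (by positivity))
    · exact le_trans (min_le_left _ _) (min_le_left _ _)
    · rw [← le_div_iff₀ (by positivity)]
      exact le_trans (min_le_left _ _) (min_le_right _ _)
    · rw [← le_div_iff₀ (by positivity)]
      exact le_trans (min_le_right _ _) (min_le_left _ _)
    · rw [← le_div_iff₀ (by positivity)]
      exact le_trans (min_le_right _ _) (min_le_right _ _)
  obtain ⟨t, ht_abs, htD⟩ : ∃ t : ℝ, |t| = ε ∧ t * D = ε * |D| := by
    rcases hD.lt_or_gt with h | h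
    · exact ⟨-ε, by rw [abs_neg, abs_of_pos hε0], by rw [abs_of_neg h]; ring⟩
    · exact ⟨ε, abs_of_pos hε0, by rw [abs_of_pos h]⟩
  have htε : -ε ≤ t ∧ t ≤ ε := abs_le.mp ht_abs.le
  have ht2 : t ^ 2 ≤ ε := by
    calc t ^ 2 = |t| ^ 2 := (sq_abs t).symm
      _ = ε * ε := by rw [ht_abs]; ring
      _ ≤ 1 * ε := by nlinarith
      _ = ε := one_mul ε
  have htc : -(ε * |c|) ≤ t * c := by
    have := neg_abs_le (t * c)
    rw [abs_mul, ht_abs] at this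
    linarith
  have hv : 0 < v₁ + 2 * t * c + t ^ 2 * v₂ := by nlinarith [abs_nonneg c]
  refine ⟨t, hv, ?_⟩
  set x : ℝ := c₁ + t * c₂ with hxdef
  set v : ℝ := v₁ + 2 * t * c + t ^ 2 * v₂ with hvdef
  have hsign : c₁ * x > 0 := by
    have h1 : |t * c₂| < |c₁| := by
      rw [abs_mul, ht_abs]
      nlinarith [abs_nonneg c₂]
    have h2 := neg_abs_le (t * c₂)
    have h3 := le_abs_self (t * c₂)
    rcases hc₁.lt_or_gt with h | h
    · rw [abs_of_neg h] at h1
      have hx : x < 0 := by rw [hxdef]; linarith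
      nlinarith
    · rw [abs_of_pos h] at h1
      have hx : 0 < x := by rw [hxdef]; linarith
      nlinarith
  have hC : 0 < c₁ * (x ^ 2 * v₁ - c₁ ^ 2 * v) := by
    have hexp : c₁ * (x ^ 2 * v₁ - c₁ ^ 2 * v)
        = 2 * (t * D) * c₁ ^ 2 + t ^ 2 * (c₁ * B) := by
      rw [hxdef, hvdef, hDdef, hBdef]; ring
    rw [hexp, htD]
    have ht2e : t ^ 2 = ε ^ 2 := by rw [← sq_abs, ht_abs]
    rw [ht2e]
    have hscaled : ε * (ε * (|c₁ * B| + 1)) ≤ ε * (2 * c₁ ^ 2 * |D|) :=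
      mul_le_mul_of_nonneg_left hεB hε0.le
    have habs : 0 ≤ c₁ * B + |c₁ * B| := by linarith [neg_abs_le (c₁ * B)]
    clear hexp htD ht_abs htε ht2 htc hv hεv hεc hεB hsign hDdef hBdef hD hc₁ hvf hv₁ hv₂
    nlinarith [sq_nonneg ε, mul_nonneg (mul_nonneg hε0.le hε0.le) habs]
  rw [Real.sqrt_mul hv₁.le, Real.sqrt_mul hv.le]
  have hsf : 0 < Real.sqrt vf := Real.sqrt_pos.mpr hvf
  have hmain : c₁ / Real.sqrt v₁ < x / Real.sqrt v :=
    sqrt_lt_of_sq c₁ x v₁ v hv₁ hv hsign hc₁ hC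
  rw [div_lt_div_iff₀ (Real.sqrt_pos.mpr hv₁) (Real.sqrt_pos.mpr hv)] at hmain
  rw [div_lt_div_iff₀ (by positivity) (by positivity)]
  nlinarith [mul_lt_mul_of_pos_right hmain hsf]



theorem stmt_0 {Ω : Type*} [MeasurableSpace Ω] (P : Measure Ω) [IsProbabilityMeasure P]
    (M₁ M₂ f : Ω → ℝ)
    (hM₁ : MemLp M₁ 2 P) (hM₂ : MemLp M₂ 2 P) (hf : MemLp f 2 P)
    (hv₁ : 0 < var P M₁) (hv₂ : 0 < var P M₂) (hvf : 0 < var P f)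
    (hc₁ : cov P M₁ f ≠ 0) (hc₂ : cov P M₂ f ≠ 0)
    (h₁ : cov P M₁ M₂ ≠ cov P M₂ f * var P M₁ / cov P M₁ f)
    (h₂ : cov P M₁ M₂ ≠ cov P M₁ f * var P M₂ / cov P M₂ f) :
    ∃ w₁ w₂ : ℝ,
      pearson P (fun ω => w₁ * M₁ ω + w₂ * M₂ ω) f >
        max (pearson P M₁ f) (pearson P M₂ f) := by
  rcases le_total (pearson P M₂ f) (pearson P M₁ f) with h | h
  · rw [max_eq_left h]
    have hD : cov P M₂ f * var P M₁ - cov P M₁ f * cov P M₁ M₂ ≠ 0 := by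
      intro heq
      exact h₁ ((eq_div_iff hc₁).mpr (by linarith))
    obtain ⟨t, hvt, hlt⟩ := key (var P M₁) (var P M₂) (var P f) (cov P M₁ f) (cov P M₂ f)
      (cov P M₁ M₂) hv₁ hv₂.le hvf hc₁ hD
    refine ⟨1, t, ?_⟩
    rw [pearson_combo P hM₁ hM₂ hf 1 t]
    show _ > cov P M₁ f / Real.sqrt (var P M₁ * var P f)
    have e1 : (1 : ℝ) * cov P M₁ f + t * cov P M₂ f = cov P M₁ f + t * cov P M₂ f := by ring
    have e2 : (1 : ℝ) ^ 2 * var P M₁ + 2 * 1 * t * cov P M₁ M₂ + t ^ 2 * var P M₂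
        = var P M₁ + 2 * t * cov P M₁ M₂ + t ^ 2 * var P M₂ := by ring
    rw [e1, e2]
    exact hlt
  · rw [max_eq_right h]
    have hD : cov P M₁ f * var P M₂ - cov P M₂ f * cov P M₂ M₁ ≠ 0 := by
      rw [cov_comm P M₂ M₁]
      intro heq
      exact h₂ ((eq_div_iff hc₂).mpr (by linarith))
    obtain ⟨t, hvt, hlt⟩ := key (var P M₂) (var P M₁) (var P f) (cov P M₂ f) (cov P M₁ f)
      (cov P M₂ M₁) hv₂ hv₁.le hvf hc₂ hD
    refine ⟨t, 1, ?_⟩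
    rw [pearson_combo P hM₁ hM₂ hf t 1]
    show _ > cov P M₂ f / Real.sqrt (var P M₂ * var P f)
    have e1 : t * cov P M₁ f + (1 : ℝ) * cov P M₂ f = cov P M₂ f + t * cov P M₁ f := by ring
    have e2 : t ^ 2 * var P M₁ + 2 * t * 1 * cov P M₁ M₂ + (1 : ℝ) ^ 2 * var P M₂
        = var P M₂ + 2 * t * cov P M₂ M₁ + t ^ 2 * var P M₁ := by
      rw [cov_comm P M₂ M₁]; ring
    rw [e1, e2]
    exact hlt
end

section
/- Let n and m be natural numbers with 1 ≤ m ≤ n. The average, over all m-element subsets S of {1, 2, …, n}, of the minimum element of S equals (n + 1)/(m + 1). Equivalently, (m + 1) · ∑_{S ⊆ {1,…,n}, |S| = m} (min S) = (n + 1) · C(n, m), where C(n, m) is the binomial coefficient and the sum ranges over all m-element subsets S of {1,…,n}. -/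
open Finset

theorem stmt_1 (n m : ℕ) (hm : 1 ≤ m) (hmn : m ≤ n) :
    (m + 1) *
        ∑ S ∈ ((Finset.Icc 1 n).powersetCard m).attach,
          S.1.min' (Finset.card_pos.mp (by
            have h := (Finset.mem_powersetCard.mp S.2).2
            omega)) =
      (n + 1) * Nat.choose n m := by
  set g : Finset ℕ → ℕ := fun S => ∑ k ∈ Icc 1 n, if ∀ x ∈ S, k ≤ x then 1 else 0 with hg
  have key : ∑ S ∈ ((Finset.Icc 1 n).powersetCard m).attach,
      S.1.min' (Finset.card_pos.mp (by
        have h := (Finset.mem_powersetCard.mp S.2).2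
        omega)) = ∑ S ∈ (Finset.Icc 1 n).powersetCard m, g S := by
    rw [← Finset.sum_attach ((Finset.Icc 1 n).powersetCard m) g]
    refine Finset.sum_congr rfl fun S _ => ?_
    obtain ⟨hsub, hcard⟩ := Finset.mem_powersetCard.mp S.2
    have hne : S.1.Nonempty := Finset.card_pos.mp (by omega)
    have hmin := S.1.min'_mem hne
    have hmem : S.1.min' hne ∈ Icc 1 n := hsub hmin
    rw [Finset.mem_Icc] at hmem
    have : ∀ k, (∀ x ∈ S.1, k ≤ x) ↔ k ≤ S.1.min' hne := by
      intro k
      constructor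
      · intro h; exact h _ hmin
      · intro h x hx; exact h.trans (Finset.min'_le _ _ hx)
    simp only [hg, this]
    rw [← Finset.sum_filter]
    simp only [Finset.sum_const, smul_eq_mul, mul_one]
    have : (Icc 1 n).filter (fun k => k ≤ S.1.min' hne) = Icc 1 (S.1.min' hne) := by
      ext k; simp only [mem_filter, mem_Icc]; omega
    rw [this, Nat.card_Icc]
    omega
  rw [key, hg]
  rw [Finset.sum_comm]
  have step : ∀ k ∈ Icc 1 n, (∑ S ∈ (Finset.Icc 1 n).powersetCard m,
      if ∀ x ∈ S, k ≤ x then 1 else 0) = (n + 1 - k).choose m := by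
    intro k hk
    rw [Finset.mem_Icc] at hk
    rw [← Finset.sum_filter]
    have hfil : ((Finset.Icc 1 n).powersetCard m).filter (fun S => ∀ x ∈ S, k ≤ x) =
        (Finset.Icc k n).powersetCard m := by
      ext S
      simp only [Finset.mem_filter, Finset.mem_powersetCard, Finset.subset_iff,
        Finset.mem_Icc]
      constructor
      · rintro ⟨⟨hs, hc⟩, hall⟩
        exact ⟨fun x hx => ⟨hall x hx, (hs hx).2⟩, hc⟩
      · rintro ⟨hs, hc⟩
        exact ⟨⟨fun x hx => ⟨hk.1.trans (hs hx).1, (hs hx).2⟩, hc⟩, fun x hx => (hs hx).1⟩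
    rw [hfil, Finset.sum_const, smul_eq_mul, mul_one, Finset.card_powersetCard,
      Nat.card_Icc]
  rw [Finset.sum_congr rfl step]
  have reindex : ∑ k ∈ Icc 1 n, (n + 1 - k).choose m = ∑ j ∈ Icc 1 n, j.choose m := by
    apply Finset.sum_nbij' (i := fun k => n + 1 - k) (j := fun k => n + 1 - k)
    all_goals intro a ha
    all_goals simp only [Finset.mem_Icc] at *
    all_goals omega
  rw [reindex]
  have hdrop : ∑ j ∈ Icc 1 n, j.choose m = ∑ j ∈ Icc m n, j.choose m := by
    symm
    apply Finset.sum_subset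
    · intro x hx; simp only [Finset.mem_Icc] at *; omega
    · intro x hx hx2
      simp only [Finset.mem_Icc] at *
      exact Nat.choose_eq_zero_of_lt (by omega)
  rw [hdrop, Nat.sum_Icc_choose]
  have := Nat.add_one_mul_choose_eq n m
  rw [this, Nat.mul_comm]
end

section
/- Let c₁, c₂, c₁₂, v₁, v₂, v_f be real numbers with v₁ > 0, v₂ > 0, v_f > 0 and v₁·v₂ > c₁₂² (so that a²·v₁ + 2a·c₁₂ + v₂ > 0 for all real a). Define h : ℝ → ℝ by h(a) = (a·c₁ + c₂) / √((a²·v₁ + 2a·c₁₂ + v₂) · v_f). If c₁ ≠ 0, c₂ ≠ 0, c₂·c₁₂ ≠ c₁·v₂, and c₁·c₁₂ ≠ c₂·v₁, then the derivative of h vanishes at a* = (c₂·c₁₂ − c₁·v₂) / (c₁·c₁₂ − c₂·v₁), i.e., h'(a*) = 0. -/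
lemma stmt_5_aux (c₁ c₂ c₁₂ v₁ v₂ vf : ℝ) (a : ℝ)
    (hvf : 0 < vf)
    (hq : 0 < a ^ 2 * v₁ + 2 * a * c₁₂ + v₂)
    (hkey : c₁ * (a ^ 2 * v₁ + 2 * a * c₁₂ + v₂) = (a * c₁ + c₂) * (a * v₁ + c₁₂)) :
    deriv (fun a : ℝ => (a * c₁ + c₂) / Real.sqrt ((a ^ 2 * v₁ + 2 * a * c₁₂ + v₂) * vf))
        a = 0 := by
  have hqv : 0 < (a ^ 2 * v₁ + 2 * a * c₁₂ + v₂) * vf := mul_pos hq hvf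
  have hs : 0 < Real.sqrt ((a ^ 2 * v₁ + 2 * a * c₁₂ + v₂) * vf) := Real.sqrt_pos.mpr hqv
  set s := Real.sqrt ((a ^ 2 * v₁ + 2 * a * c₁₂ + v₂) * vf) with hsdef
  have hs2 : s ^ 2 = (a ^ 2 * v₁ + 2 * a * c₁₂ + v₂) * vf := Real.sq_sqrt hqv.le
  have h1 : HasDerivAt (fun a : ℝ => (a ^ 2 * v₁ + 2 * a * c₁₂ + v₂) * vf)
      ((2 * a * v₁ + 2 * c₁₂) * vf) a := by
    have hp : HasDerivAt (fun a : ℝ => a ^ 2 * v₁ + 2 * a * c₁₂ + v₂)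
        (2 * a * v₁ + 2 * c₁₂) a := by
      have := (((hasDerivAt_pow 2 a).mul_const v₁).add
        (((hasDerivAt_id a).const_mul 2).mul_const c₁₂)).add_const v₂
      refine this.congr_deriv ?_
      norm_num
    exact hp.mul_const vf
  have h2 : HasDerivAt (fun a : ℝ => Real.sqrt ((a ^ 2 * v₁ + 2 * a * c₁₂ + v₂) * vf))
      ((2 * a * v₁ + 2 * c₁₂) * vf / (2 * s)) a := h1.sqrt hqv.ne'
  have h3 : HasDerivAt (fun a : ℝ => a * c₁ + c₂) c₁ a := by
    simpa using ((hasDerivAt_id a).mul_const c₁).add_const c₂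
  have h4 : HasDerivAt (fun a : ℝ => (a * c₁ + c₂) / Real.sqrt ((a ^ 2 * v₁ + 2 * a * c₁₂ + v₂) * vf)) _ a :=
    h3.div h2 hs.ne'
  rw [h4.deriv]
  rw [div_eq_zero_iff]
  left
  have h2s : (2 : ℝ) * s ≠ 0 := by positivity
  rw [← hsdef, sub_eq_zero, mul_div_assoc', eq_div_iff h2s]
  linear_combination (2 * c₁) * hs2 + (2 * vf) * hkey

theorem stmt_5 (c₁ c₂ c₁₂ v₁ v₂ vf : ℝ)
    (hv₁ : 0 < v₁) (hv₂ : 0 < v₂) (hvf : 0 < vf) (hnc : c₁₂ ^ 2 < v₁ * v₂)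
    (hc₁ : c₁ ≠ 0) (hc₂ : c₂ ≠ 0)
    (h₁ : c₂ * c₁₂ ≠ c₁ * v₂) (h₂ : c₁ * c₁₂ ≠ c₂ * v₁) :
    deriv (fun a : ℝ => (a * c₁ + c₂) / Real.sqrt ((a ^ 2 * v₁ + 2 * a * c₁₂ + v₂) * vf))
        ((c₂ * c₁₂ - c₁ * v₂) / (c₁ * c₁₂ - c₂ * v₁)) = 0 := by
  set a : ℝ := (c₂ * c₁₂ - c₁ * v₂) / (c₁ * c₁₂ - c₂ * v₁) with ha
  have hden : c₁ * c₁₂ - c₂ * v₁ ≠ 0 := sub_ne_zero.mpr h₂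
  have hq : 0 < a ^ 2 * v₁ + 2 * a * c₁₂ + v₂ := by
    nlinarith [sq_nonneg (a * v₁ + c₁₂), hv₁.le]
  have hkey : c₁ * (a ^ 2 * v₁ + 2 * a * c₁₂ + v₂) = (a * c₁ + c₂) * (a * v₁ + c₁₂) := by
    rw [ha]
    field_simp
    ring
  exact stmt_5_aux c₁ c₂ c₁₂ v₁ v₂ vf a hvf hq hkey
end

section
/- Let c₁, c₂, c₁₂, v₁, v₂, v_f be real numbers with v₁ > 0, v₂ > 0, v_f > 0 and v₁·v₂ > c₁₂² (so that a²·v₁ + 2a·c₁₂ + v₂ > 0 for all real a). Define h : ℝ → ℝ by h(a) = (a·c₁ + c₂) / √((a²·v₁ + 2a·c₁₂ + v₂) · v_f). If c₁ ≠ 0, c₂ ≠ 0, c₂·c₁₂ ≠ c₁·v₂, and c₁·c₁₂ ≠ c₂·v₁, then a* = (c₂·c₁₂ − c₁·v₂) / (c₁·c₁₂ − c₂·v₁) is a global extremum of h: either h(a) ≤ h(a*) for all real a, or h(a) ≥ h(a*) for all real a. -/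
lemma aux_div_sqrt (x y P R vf : ℝ) (hP : 0 < P) (hR : 0 < R) (hvf : 0 < vf)
    (hy : 0 < y) (hkey : x ^ 2 * R ≤ y ^ 2 * P) :
    x / Real.sqrt (P * vf) ≤ y / Real.sqrt (R * vf) := by
  have sP : 0 < Real.sqrt (P * vf) := Real.sqrt_pos.2 (by positivity)
  have sR : 0 < Real.sqrt (R * vf) := Real.sqrt_pos.2 (by positivity)
  rw [div_le_div_iff₀ sP sR]
  rcases le_or_gt x 0 with hx | hx
  · have : x * Real.sqrt (R * vf) ≤ 0 := mul_nonpos_of_nonpos_of_nonneg hx sR.le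
    exact this.trans (by positivity)
  · have hsq : (x * Real.sqrt (R * vf)) ^ 2 ≤ (y * Real.sqrt (P * vf)) ^ 2 := by
      rw [mul_pow, mul_pow, Real.sq_sqrt (by positivity), Real.sq_sqrt (by positivity)]
      nlinarith
    have h1 : 0 ≤ x * Real.sqrt (R * vf) := by positivity
    have h2 : 0 ≤ y * Real.sqrt (P * vf) := by positivity
    nlinarith

theorem stmt_6 (c₁ c₂ c₁₂ v₁ v₂ vf : ℝ)
    (hv₁ : 0 < v₁) (hv₂ : 0 < v₂) (hvf : 0 < vf) (hnc : c₁₂ ^ 2 < v₁ * v₂)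
    (hc₁ : c₁ ≠ 0) (hc₂ : c₂ ≠ 0)
    (h₁ : c₂ * c₁₂ ≠ c₁ * v₂) (h₂ : c₁ * c₁₂ ≠ c₂ * v₁) :
    (∀ a : ℝ,
        (a * c₁ + c₂) / Real.sqrt ((a ^ 2 * v₁ + 2 * a * c₁₂ + v₂) * vf) ≤
          (((c₂ * c₁₂ - c₁ * v₂) / (c₁ * c₁₂ - c₂ * v₁)) * c₁ + c₂) /
            Real.sqrt ((((c₂ * c₁₂ - c₁ * v₂) / (c₁ * c₁₂ - c₂ * v₁)) ^ 2 * v₁ +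
              2 * ((c₂ * c₁₂ - c₁ * v₂) / (c₁ * c₁₂ - c₂ * v₁)) * c₁₂ + v₂) * vf)) ∨
    (∀ a : ℝ,
        (a * c₁ + c₂) / Real.sqrt ((a ^ 2 * v₁ + 2 * a * c₁₂ + v₂) * vf) ≥
          (((c₂ * c₁₂ - c₁ * v₂) / (c₁ * c₁₂ - c₂ * v₁)) * c₁ + c₂) /
            Real.sqrt ((((c₂ * c₁₂ - c₁ * v₂) / (c₁ * c₁₂ - c₂ * v₁)) ^ 2 * v₁ +
              2 * ((c₂ * c₁₂ - c₁ * v₂) / (c₁ * c₁₂ - c₂ * v₁)) * c₁₂ + v₂) * vf)) := by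
  set D := c₁ * c₁₂ - c₂ * v₁ with hD
  have hDne : D ≠ 0 := sub_ne_zero.2 h₂
  set b := (c₂ * c₁₂ - c₁ * v₂) / D with hb
  set N := c₂ ^ 2 * v₁ - 2 * c₁ * c₂ * c₁₂ + c₁ ^ 2 * v₂ with hN
  have hc₁sq : 0 < c₁ ^ 2 := by positivity
  have hNpos : 0 < N := by nlinarith [sq_nonneg (c₂ * v₁ - c₁ * c₁₂)]
  have hQ : ∀ a : ℝ, 0 < a ^ 2 * v₁ + 2 * a * c₁₂ + v₂ := by
    intro a
    nlinarith [sq_nonneg (a * v₁ + c₁₂)]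
  have hQb := hQ b
  -- numerator at b
  have hnum : b * c₁ + c₂ = -N / D := by
    field_simp [hb]
    rw [hb]
    field_simp
    rw [hN, hD]
    ring
  -- Q(b) value
  have hQbval : b ^ 2 * v₁ + 2 * b * c₁₂ + v₂ = N * (v₁ * v₂ - c₁₂ ^ 2) / D ^ 2 := by
    field_simp [hb]
    rw [hb]
    field_simp
    rw [hN, hD]
    ring
  -- key inequality
  have hkey : ∀ a : ℝ, (a * c₁ + c₂) ^ 2 * (v₁ * v₂ - c₁₂ ^ 2) ≤
      N * (a ^ 2 * v₁ + 2 * a * c₁₂ + v₂) := by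
    intro a
    rw [hN]
    nlinarith [sq_nonneg (a * (c₁ * c₁₂ - c₂ * v₁) + (c₁ * v₂ - c₂ * c₁₂))]
  have hkey2 : ∀ a : ℝ, (a * c₁ + c₂) ^ 2 * (b ^ 2 * v₁ + 2 * b * c₁₂ + v₂) ≤
      (b * c₁ + c₂) ^ 2 * (a ^ 2 * v₁ + 2 * a * c₁₂ + v₂) := by
    intro a
    have hD2 : 0 < D ^ 2 := by positivity
    have e1 : (b * c₁ + c₂) ^ 2 = N ^ 2 / D ^ 2 := by
      rw [hnum, div_pow, neg_sq]
    have h3 : (a * c₁ + c₂) ^ 2 * (N * (v₁ * v₂ - c₁₂ ^ 2)) ≤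
        N ^ 2 * (a ^ 2 * v₁ + 2 * a * c₁₂ + v₂) := by
      nlinarith [mul_le_mul_of_nonneg_left (hkey a) hNpos.le]
    rw [e1, hQbval]
    calc (a * c₁ + c₂) ^ 2 * (N * (v₁ * v₂ - c₁₂ ^ 2) / D ^ 2)
        = ((a * c₁ + c₂) ^ 2 * (N * (v₁ * v₂ - c₁₂ ^ 2))) / D ^ 2 := by ring
      _ ≤ (N ^ 2 * (a ^ 2 * v₁ + 2 * a * c₁₂ + v₂)) / D ^ 2 := by
          gcongr
      _ = N ^ 2 / D ^ 2 * (a ^ 2 * v₁ + 2 * a * c₁₂ + v₂) := by ring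
  rcases lt_or_gt_of_ne hDne with hDlt | hDgt
  · left
    intro a
    have hy : 0 < b * c₁ + c₂ := by
      rw [hnum]
      exact div_pos_of_neg_of_neg (by linarith) hDlt
    exact aux_div_sqrt _ _ _ _ _ (hQ a) hQb hvf hy (hkey2 a)
  · right
    intro a
    have hy : 0 < -(b * c₁ + c₂) := by
      rw [hnum, neg_div, neg_neg]
      exact div_pos hNpos hDgt
    have h5 : (-(a * c₁ + c₂)) ^ 2 * (b ^ 2 * v₁ + 2 * b * c₁₂ + v₂) ≤
        (-(b * c₁ + c₂)) ^ 2 * (a ^ 2 * v₁ + 2 * a * c₁₂ + v₂) := by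
      rw [neg_sq, neg_sq]; exact hkey2 a
    have := aux_div_sqrt (-(a * c₁ + c₂)) (-(b * c₁ + c₂)) _ _ vf (hQ a) hQb hvf hy h5
    simp only [neg_div] at this
    linarith
end
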